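/- For a finite abelian group G with maximally non-commutative factor system ω, the map sending g ∈ G to the character h ↦ ω(g,h)ω(h,g)⁻¹ is a group isomorphism from G onto its character group Ĝ. -/

import Mathlib

section Aux

variable {G : Type*} [CommGroup G]

/-- Multiplicativity of the commutator pairing in the second argument. -/
lemma pairing_key (ω : G → G → ℂˣ)
    (hcocycle : ∀ g h k, ω g h * ω (g * h) k = ω h k * ω g (h * k)) (g h k : G) :
    ω g (h * k) * (ω (h * k) g)⁻¹ = (ω g h * (ω h g)⁻¹) * (ω g k * (ω k g)⁻¹) := by
  have e1 := hcocycle g h k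
  have e2 := hcocycle h k g
  have e3 := hcocycle h g k
  rw [mul_comm k g] at e2
  rw [mul_comm h g] at e3
  have h1 : ω g (h * k) = (ω h k)⁻¹ * (ω g h * ω (g * h) k) := by
    rw [e1]; group
  have h2 : ω (h * k) g = (ω h k)⁻¹ * (ω k g * ω h (g * k)) := by
    rw [← e2]; group
  have h3 : ω h (g * k) = (ω g k)⁻¹ * (ω h g * ω (g * h) k) := by
    rw [e3]; group
  rw [h1, h2, h3, Units.ext_iff]
  push_cast
  field_simp

end Aux

/-- For a finite abelian group `G` with a maximally non-commutative factor system `ω`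
(a 2-cocycle with unit-modulus values), the map sending `g ∈ G` to the character
`h ↦ ω(g,h) ω(h,g)⁻¹` is a group isomorphism from `G` onto its character group
`Ĝ = Hom(G, ℂˣ)`. -/
theorem maximally_non_commutative_pairing_bijective
    {G : Type*} [CommGroup G] [Fintype G]
    (ω : G → G → ℂˣ)
    (hcocycle : ∀ g h k, ω g h * ω (g * h) k = ω h k * ω g (h * k))
    (hω : ∀ g h, ‖(ω g h : ℂ)‖ = 1)
    (hmnc : ∀ g, (∀ h, ω g h = ω h g) → g = 1) :
    ∃ φ : G →* (G →* ℂˣ),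
      Function.Bijective φ ∧ ∀ g h, φ g h = ω g h * (ω h g)⁻¹ := by
  have key := pairing_key ω hcocycle
  -- β g 1 = 1
  have hone : ∀ g : G, ω g 1 * (ω 1 g)⁻¹ = 1 := by
    intro g
    have h := key g 1 1
    rw [one_mul] at h
    have : (1 : ℂˣ) = ω g 1 * (ω 1 g)⁻¹ := by
      calc (1 : ℂˣ) = (ω g 1 * (ω 1 g)⁻¹) * (ω g 1 * (ω 1 g)⁻¹)⁻¹ := by group
        _ = ((ω g 1 * (ω 1 g)⁻¹) * (ω g 1 * (ω 1 g)⁻¹)) * (ω g 1 * (ω 1 g)⁻¹)⁻¹ := by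
            rw [← h]
        _ = ω g 1 * (ω 1 g)⁻¹ := by group
    exact this.symm
  -- the character associated to g
  let χ : G → (G →* ℂˣ) := fun g =>
    { toFun := fun h => ω g h * (ω h g)⁻¹
      map_one' := hone g
      map_mul' := fun h k => key g h k }
  let φ : G →* (G →* ℂˣ) :=
    { toFun := χ
      map_one' := by
        refine MonoidHom.ext fun h => ?_
        show ω 1 h * (ω h 1)⁻¹ = 1
        calc ω 1 h * (ω h 1)⁻¹ = (ω h 1 * (ω 1 h)⁻¹)⁻¹ := by group
          _ = 1 := by rw [hone h]; group
      map_mul' := fun g g' => by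
        refine MonoidHom.ext fun h => ?_
        show ω (g * g') h * (ω h (g * g'))⁻¹ = (ω g h * (ω h g)⁻¹) * (ω g' h * (ω h g')⁻¹)
        have hk := key h g g'
        calc ω (g * g') h * (ω h (g * g'))⁻¹
            = (ω h (g * g') * (ω (g * g') h)⁻¹)⁻¹ := by group
          _ = ((ω h g * (ω g h)⁻¹) * (ω h g' * (ω g' h)⁻¹))⁻¹ := by rw [hk]
          _ = (ω g h * (ω h g)⁻¹) * (ω g' h * (ω h g')⁻¹) := by
              group
              simp [mul_comm, mul_left_comm, mul_assoc, zpow_neg, zpow_one,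
                mul_inv_cancel_left, inv_mul_cancel_left] }
  have hinj : Function.Injective φ := by
    refine (injective_iff_map_eq_one φ).mpr fun g hg => hmnc g fun h => ?_
    have h1 : ω g h * (ω h g)⁻¹ = 1 := by
      have : φ g h = (1 : G →* ℂˣ) h := by rw [hg]
      exact this
    calc ω g h = ω g h * (ω h g)⁻¹ * ω h g := by group
      _ = ω h g := by rw [h1]; group
  refine ⟨φ, ⟨hinj, ?_⟩, fun g h => rfl⟩
  -- cardinality: |G →* ℂˣ| = |G|
  have hexp : NeZero ((Monoid.exponent G : ℕ) : ℂ) := by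
    refine ⟨?_⟩
    exact_mod_cast Nat.cast_ne_zero.mpr Monoid.exponent_ne_zero_of_finite
  obtain ⟨e⟩ := CommGroup.monoidHom_mulEquiv_of_hasEnoughRootsOfUnity G ℂ
  have : Finite (G →* ℂˣ) := Finite.of_equiv G e.symm.toEquiv
  have hcard : Nat.card (G →* ℂˣ) = Nat.card G := Nat.card_eq_of_bijective e e.bijective
  exact ((Nat.bijective_iff_injective_and_card φ).mpr ⟨hinj, hcard.symm⟩).2
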